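/- For every fixed t ∈ [0,1/2], the function a ↦ ℓ(t,a) is convex on [0,1], where ℓ(t,a) = 2(1−a)t if a ≥ 1/2; t/(2a) if t ≤ a < 1/2; 1 − a/(2t) if 0 ≤ a < t; and ℓ(0,0)=0. -/

import Mathlib

noncomputable def ell (t a : ℝ) : ℝ :=
  if t = 0 ∧ a = 0 then 0
  else if 1/2 ≤ a then 2*(1-a)*t
  else if t ≤ a then t/(2*a)
  else 1 - a/(2*t)

lemma ell_eq_of_pos (t : ℝ) (ht : 0 < t) (a : ℝ) :
    ell t a = if 1/2 ≤ a then 2*(1-a)*t else if t ≤ a then t/(2*a) else 1 - a/(2*t) := by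
  unfold ell
  rw [if_neg]
  rintro ⟨h, -⟩
  exact ht.ne' h

lemma ell_zero (a : ℝ) (ha : 0 ≤ a) : ell 0 a = 0 := by
  unfold ell
  split_ifs <;> first | rfl | ring | simp | linarith

/-- The tangent line at `s` lies below `ell t ·`. -/
lemma tangent_le (t s x : ℝ) (ht : 0 < t) (hts : t ≤ s) (hs : s ≤ 1/2)
    (hx0 : 0 ≤ x) (hx1 : x ≤ 1) :
    t/s - t*x/(2*s^2) ≤ ell t x := by
  have hs0 : 0 < s := lt_of_lt_of_le ht hts
  have key : t/s - t*x/(2*s^2) = (2*s - x)*t/(2*s^2) := by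
    field_simp
  rw [ell_eq_of_pos t ht, key]
  split_ifs with h1 h2
  · rw [div_le_iff₀ (by positivity)]
    nlinarith [mul_nonneg ht.le (mul_nonneg (sub_nonneg.2 hs)
      (by nlinarith : (0:ℝ) ≤ (2*s+1)*x - 2*s))]
  · have hx0' : 0 < x := lt_of_lt_of_le ht h2
    rw [div_le_div_iff₀ (by positivity) (by positivity)]
    nlinarith [sq_nonneg (s - x), ht.le, hx0'.le]
  · push_neg at h1 h2
    have hrhs : 1 - x/(2*t) = (2*t - x)/(2*t) := by field_simp
    rw [hrhs, div_le_div_iff₀ (by positivity) (by positivity)]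
    nlinarith [mul_nonneg (sub_nonneg.2 hts)
      (show (0:ℝ) ≤ 2*s*t - x*(s+t) by
        nlinarith [mul_nonneg (sub_nonneg.2 h2.le) (by positivity : (0:ℝ) ≤ s+t),
          mul_nonneg ht.le (sub_nonneg.2 hts)])]

/-- At `s = max t (min x (1/2))`, the tangent line equals `ell t x`. -/
lemma tangent_eq (t x : ℝ) (ht : 0 < t) (ht2 : t ≤ 1/2) (hx0 : 0 ≤ x) :
    ell t x = t/(max t (min x (1/2))) - t*x/(2*(max t (min x (1/2)))^2) := by
  rw [ell_eq_of_pos t ht]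
  split_ifs with h1 h2
  · have hmin : min x (1/2) = 1/2 := min_eq_right h1
    have hmax : max t (min x (1/2)) = 1/2 := by rw [hmin]; exact max_eq_right ht2
    rw [hmax]
    field_simp
  · have hx2 : x ≤ 1/2 := le_of_not_ge h1
    have hmin : min x (1/2) = x := min_eq_left hx2
    have hmax : max t (min x (1/2)) = x := by rw [hmin]; exact max_eq_right h2
    have hx0' : 0 < x := lt_of_lt_of_le ht h2
    rw [hmax]
    field_simp
    ring
  · push_neg at h1 h2
    have hmax : max t (min x (1/2)) = t := max_eq_left ((min_le_left _ _).trans h2.le)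
    rw [hmax]
    field_simp

theorem ell_convex_in_a (t : ℝ) (ht : t ∈ Set.Icc (0:ℝ) (1/2)) :
    ConvexOn ℝ (Set.Icc (0:ℝ) 1) (fun a => ell t a) := by
  obtain ⟨ht0, ht2⟩ := ht
  refine ⟨convex_Icc 0 1, ?_⟩
  intro x hx y hy a b ha hb hab
  obtain ⟨hx0, hx1⟩ := hx
  obtain ⟨hy0, hy1⟩ := hy
  rcases eq_or_lt_of_le ht0 with rfl | htpos
  · simp only [smul_eq_mul]
    rw [ell_zero x hx0, ell_zero y hy0, ell_zero _ (by positivity)]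
    simp
  · simp only [smul_eq_mul]
    set c := a*x + b*y with hc
    have hc0 : 0 ≤ c := by positivity
    have hc1 : c ≤ 1 := by nlinarith
    set s := max t (min c (1/2)) with hs
    have hts : t ≤ s := le_max_left _ _
    have hs2 : s ≤ 1/2 := max_le ht2 (min_le_right _ _)
    have hs0 : 0 < s := lt_of_lt_of_le htpos hts
    have heq : ell t c = t/s - t*c/(2*s^2) := tangent_eq t c htpos ht2 hc0
    have hlin : t/s - t*c/(2*s^2)
        = a*(t/s - t*x/(2*s^2)) + b*(t/s - t*y/(2*s^2)) := by
      rw [hc]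
      linear_combination (-(t/s)) * hab
    calc ell t c = a*(t/s - t*x/(2*s^2)) + b*(t/s - t*y/(2*s^2)) := by rw [heq, hlin]
      _ ≤ a * ell t x + b * ell t y := by
          gcongr
          · exact tangent_le t s x htpos hts hs2 hx0 hx1
          · exact tangent_le t s y htpos hts hs2 hy0 hy1
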